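/- For any d ≥ 1 and Boolean variables x₁,…,x_d ∈ {0,1}, the negative monomial −∏ᵢ₌₁^d xᵢ equals min over y ∈ {0,1} of ((d−1)y − ∑ᵢ₌₁^d xᵢ y). -/
import Mathlib


theorem stmt_9 (d : ℕ) (hd : 1 ≤ d) (x : Fin d → ℤ) (hx : ∀ i, x i = 0 ∨ x i = 1) :
    -(∏ i, x i) =
      min (((d : ℤ) - 1) * 0 - (∑ i, x i) * 0) (((d : ℤ) - 1) * 1 - (∑ i, x i) * 1) := by
  simp only [mul_zero, mul_one, sub_zero]
  by_cases h : ∀ i, x i = 1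
  · have hp : (∏ i, x i) = 1 := by simp [h]
    have hs : (∑ i, x i) = d := by simp [h]
    rw [hp, hs]
    have : (1 : ℤ) ≤ d := by exact_mod_cast hd
    rw [min_eq_right (by linarith)]
    ring
  · push_neg at h
    obtain ⟨j, hj⟩ := h
    have hj0 : x j = 0 := (hx j).resolve_right hj
    have hp : (∏ i, x i) = 0 := Finset.prod_eq_zero (Finset.mem_univ j) hj0
    have hs : (∑ i, x i) ≤ (d : ℤ) - 1 := by
      calc (∑ i, x i) = ∑ i ∈ Finset.univ.erase j, x i := by
            rw [← Finset.sum_erase_add _ _ (Finset.mem_univ j), hj0, add_zero]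
        _ ≤ ∑ _i ∈ Finset.univ.erase j, (1 : ℤ) :=
            Finset.sum_le_sum (fun i _ => by rcases hx i with h | h <;> simp [h])
        _ = (d : ℤ) - 1 := by
            simp [Finset.card_erase_of_mem, Finset.card_univ]
            omega
    rw [hp, min_eq_left (by linarith)]
    simp
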